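/- Let g be a metric on ℝⁿ. If g is log concave in the sense of Griffiths, i.e. for all u ∈ ℂ^r, v ∈ ℂⁿ one has Σ_{j,k} (Θ^g_{jk} u, u)_g v_j \bar{v}_k ≤ 0, then the inverse metric g⁻¹ is log convex in the sense of Griffiths, i.e. Σ_{j,k} (Θ^{g⁻¹}_{jk} u, u)_{g⁻¹} v_j \bar{v}_k ≥ 0 for all u ∈ ℂ^r, v ∈ ℂⁿ. -/

import Mathlib

open scoped ComplexOrder
open Matrix MeasureTheory

section Preamble

variable {ι : Type*} [Fintype ι] [DecidableEq ι] {r : ℕ}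

/-- Partial derivative of a complex-valued function on `ι → ℝ` in direction `j`. -/
noncomputable def pdC (j : ι) (f : (ι → ℝ) → ℂ) (x : ι → ℝ) : ℂ :=
  fderiv ℝ f x (Pi.single j 1)

/-- Partial derivative of a real-valued function on `ι → ℝ` in direction `j`. -/
noncomputable def pdR (j : ι) (f : (ι → ℝ) → ℝ) (x : ι → ℝ) : ℝ :=
  fderiv ℝ f x (Pi.single j 1)

/-- Entrywise partial derivative of a matrix-valued function. -/
noncomputable def mpd (j : ι) (g : (ι → ℝ) → Matrix (Fin r) (Fin r) ℂ) (x : ι → ℝ) :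
    Matrix (Fin r) (Fin r) ℂ :=
  Matrix.of fun a b => pdC j (fun y => g y a b) x

/-- The curvature-type quantity `Θ_{jk} = ∂_{x_k}(g⁻¹ ∂_{x_j} g)`. -/
noncomputable def Theta (g : (ι → ℝ) → Matrix (Fin r) (Fin r) ℂ) (j k : ι) (x : ι → ℝ) :
    Matrix (Fin r) (Fin r) ℂ :=
  mpd k (fun y => (g y)⁻¹ * mpd j g y) x

/-- The pairing `(u, v)_g = v* g u`. -/
noncomputable def ip (g : Matrix (Fin r) (Fin r) ℂ) (u v : Fin r → ℂ) : ℂ :=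
  star v ⬝ᵥ g.mulVec u

/-- A metric: twice differentiable entries, Hermitian positive definite values. -/
def IsMetric (g : (ι → ℝ) → Matrix (Fin r) (Fin r) ℂ) : Prop :=
  (∀ x, (g x).PosDef) ∧ ∀ a b, ContDiff ℝ 2 fun x => g x a b

/-- Log concavity in the sense of Nakano. -/
def NakanoLogConcave (g : (ι → ℝ) → Matrix (Fin r) (Fin r) ℂ) : Prop :=
  ∀ (x : ι → ℝ) (u : ι → Fin r → ℂ),
    ∑ j, ∑ k, ip (g x) ((Theta g j k x).mulVec (u j)) (u k) ≤ 0

/-- Log concavity in the sense of Griffiths. -/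
def GriffithsLogConcave (g : (ι → ℝ) → Matrix (Fin r) (Fin r) ℂ) : Prop :=
  ∀ (x : ι → ℝ) (u : Fin r → ℂ) (v : ι → ℂ),
    ∑ j, ∑ k, ip (g x) ((Theta g j k x).mulVec u) u * (v j * star (v k)) ≤ 0

end Preamble
section AuxLemmas

variable {n : ℕ}

lemma pdC_sum' {κ : Type*} {j : Fin n} {x : Fin n → ℝ} {s : Finset κ}
    {f : κ → (Fin n → ℝ) → ℂ} (h : ∀ i ∈ s, DifferentiableAt ℝ (f i) x) :
    pdC j (fun y => ∑ i ∈ s, f i y) x = ∑ i ∈ s, pdC j (f i) x := by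
  unfold pdC
  rw [fderiv_fun_sum h]
  simp

lemma pdC_mul' {j : Fin n} {x : Fin n → ℝ} {f h : (Fin n → ℝ) → ℂ}
    (hf : DifferentiableAt ℝ f x) (hh : DifferentiableAt ℝ h x) :
    pdC j (fun y => f y * h y) x = pdC j f x * h x + f x * pdC j h x := by
  unfold pdC
  rw [fderiv_fun_mul hf hh]
  simp
  ring

lemma pdC_neg' {j : Fin n} {x : Fin n → ℝ} {f : (Fin n → ℝ) → ℂ} :
    pdC j (fun y => -f y) x = -pdC j f x := by
  unfold pdC
  rw [fderiv_fun_neg]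
  simp

lemma pdC_const' {j : Fin n} {x : Fin n → ℝ} {c : ℂ} :
    pdC j (fun _ => c) x = 0 := by
  unfold pdC
  rw [fderiv_fun_const]
  simp

lemma contDiff_pdC {f : (Fin n → ℝ) → ℂ} (hf : ContDiff ℝ 2 f) (j : Fin n) :
    ContDiff ℝ 1 (pdC j f) :=
  (hf.fderiv_right (m := 1) (by norm_num)).clm_apply contDiff_const

lemma pdC_comm {f : (Fin n → ℝ) → ℂ} (hf : ContDiff ℝ 2 f) (j k : Fin n) (x : Fin n → ℝ) :
    pdC k (pdC j f) x = pdC j (pdC k f) x := by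
  have hsym : IsSymmSndFDerivAt ℝ f x := hf.contDiffAt.isSymmSndFDerivAt (by simp)
  have hd : DifferentiableAt ℝ (fderiv ℝ f) x :=
    ((hf.fderiv_right (m := 1) (by norm_num)).differentiable one_ne_zero) x
  have comp : ∀ a b : Fin n, pdC b (pdC a f) x
      = fderiv ℝ (fderiv ℝ f) x (Pi.single b 1) (Pi.single a 1) := by
    intro a b
    show fderiv ℝ (fun y => fderiv ℝ f y (Pi.single a 1)) x (Pi.single b 1) = _
    rw [fderiv_clm_apply hd (differentiableAt_const _)]
    simp
  rw [comp j k, comp k j, hsym]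

end AuxLemmas
section AuxLemmas2

variable {n r : ℕ}

lemma mpd_entry (j : Fin n) (A : (Fin n → ℝ) → Matrix (Fin r) (Fin r) ℂ) (x : Fin n → ℝ)
    (a b : Fin r) : mpd j A x a b = pdC j (fun y => A y a b) x := rfl

lemma mpd_mul' {j : Fin n} {x : Fin n → ℝ} {A B : (Fin n → ℝ) → Matrix (Fin r) (Fin r) ℂ}
    (hA : ∀ a b, DifferentiableAt ℝ (fun y => A y a b) x)
    (hB : ∀ a b, DifferentiableAt ℝ (fun y => B y a b) x) :
    mpd j (fun y => A y * B y) x = mpd j A x * B x + A x * mpd j B x := by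
  ext a b
  rw [Matrix.add_apply, Matrix.mul_apply, Matrix.mul_apply, mpd_entry]
  have h1 : (fun y => (A y * B y) a b) = fun y => ∑ c, A y a c * B y c b := by
    funext y; exact Matrix.mul_apply
  rw [h1, pdC_sum' (fun i _ => (hA a i).fun_mul (hB i b)), ← Finset.sum_add_distrib]
  refine Finset.sum_congr rfl fun c _ => ?_
  rw [pdC_mul' (hA a c) (hB c b), mpd_entry, mpd_entry]

lemma mpd_neg' {j : Fin n} {x : Fin n → ℝ} {A : (Fin n → ℝ) → Matrix (Fin r) (Fin r) ℂ} :
    mpd j (fun y => -A y) x = -mpd j A x := by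
  ext a b
  rw [Matrix.neg_apply, mpd_entry, mpd_entry, ← pdC_neg']
  rfl

lemma mpd_const' {j : Fin n} {x : Fin n → ℝ} {C : Matrix (Fin r) (Fin r) ℂ} :
    mpd j (fun _ => C) x = 0 := by
  ext a b
  rw [mpd_entry, Matrix.zero_apply]
  exact pdC_const'

lemma contDiff_det' {N : WithTop ℕ∞} {m : ℕ} {M : (Fin n → ℝ) → Matrix (Fin m) (Fin m) ℂ}
    (h : ∀ a b, ContDiff ℝ N fun y => M y a b) : ContDiff ℝ N fun y => (M y).det := by
  simp only [Matrix.det_apply']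
  exact ContDiff.sum fun σ _ => (contDiff_const (𝕜 := ℝ)).mul (contDiff_prod (𝕜 := ℝ) fun i _ => h (σ i) i)

lemma contDiff_inv_entries {N : WithTop ℕ∞} {m : ℕ}
    {M : (Fin n → ℝ) → Matrix (Fin m) (Fin m) ℂ}
    (h : ∀ a b, ContDiff ℝ N fun y => M y a b) (hdet : ∀ y, (M y).det ≠ 0) :
    ∀ a b, ContDiff ℝ N fun y => (M y)⁻¹ a b := by
  intro a b
  have hdet' : ContDiff ℝ N fun y => (M y).det := contDiff_det' h
  have hadj : ContDiff ℝ N fun y => (M y).adjugate a b := by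
    simp only [Matrix.adjugate_apply]
    apply contDiff_det'
    intro c d
    by_cases hc : c = b
    · simpa [Matrix.updateRow_apply, hc] using contDiff_const (𝕜 := ℝ) (E := Fin n → ℝ) (c := Pi.single (M := fun _ : Fin m => ℂ) a 1 d)
    · simpa [Matrix.updateRow_apply, hc] using h c d
  have heq : (fun y => (M y)⁻¹ a b) = fun y => ((M y).det)⁻¹ * (M y).adjugate a b := by
    funext y
    rw [Matrix.inv_def, Matrix.smul_apply, Ring.inverse_eq_inv, smul_eq_mul]
  rw [heq]
  exact (hdet'.inv hdet).mul hadj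

end AuxLemmas2
section KeyIdentity

variable {n r : ℕ}

lemma matrix_alg (G Gi P Q S : Matrix (Fin r) (Fin r) ℂ) (h1 : G * Gi = 1) :
    -(S * Gi + P * -(Gi * Q * Gi)) = -(G * (-(Gi * P * Gi) * Q + Gi * S) * Gi) := by
  have hcl : ∀ X : Matrix (Fin r) (Fin r) ℂ, G * (Gi * X) = X := fun X => by
    rw [← Matrix.mul_assoc, h1, Matrix.one_mul]
  simp only [Matrix.neg_mul, Matrix.mul_neg, Matrix.mul_add, Matrix.add_mul,
    Matrix.mul_assoc, neg_add_rev, neg_neg, hcl]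
  abel

lemma theta_inv_eq {g : (Fin n → ℝ) → Matrix (Fin r) (Fin r) ℂ}
    (hg : IsMetric g) (j k : Fin n) (x : Fin n → ℝ) :
    Theta (fun y => (g y)⁻¹) j k x = -(g x * Theta g k j x * (g x)⁻¹) := by
  obtain ⟨hpd, hC⟩ := hg
  have hU : ∀ y, IsUnit (g y).det := fun y => (hpd y).det_pos.ne'.isUnit
  have hdet : ∀ y, (g y).det ≠ 0 := fun y => (hpd y).det_pos.ne'
  have hginvC : ∀ a b, ContDiff ℝ 2 fun y => (g y)⁻¹ a b := contDiff_inv_entries hC hdet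
  have hgd : ∀ (a b) (y : Fin n → ℝ), DifferentiableAt ℝ (fun z => g z a b) y :=
    fun a b y => ((hC a b).differentiable two_ne_zero) y
  have hinvd : ∀ (a b) (y : Fin n → ℝ), DifferentiableAt ℝ (fun z => (g z)⁻¹ a b) y :=
    fun a b y => ((hginvC a b).differentiable two_ne_zero) y
  have hmpdd : ∀ (i : Fin n) (a b) (y : Fin n → ℝ),
      DifferentiableAt ℝ (fun z => mpd i g z a b) y :=
    fun i a b y => ((contDiff_pdC (hC a b) i).differentiable one_ne_zero) y
  -- derivative of the inverse
  have hinv_deriv : ∀ (i : Fin n) (y : Fin n → ℝ),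
      mpd i (fun z => (g z)⁻¹) y = -((g y)⁻¹ * mpd i g y * (g y)⁻¹) := by
    intro i y
    have h1 : mpd i (fun z => g z * (g z)⁻¹) y = 0 := by
      have he : (fun z => g z * (g z)⁻¹) = fun _ => (1 : Matrix (Fin r) (Fin r) ℂ) := by
        funext z; exact Matrix.mul_nonsing_inv _ (hU z)
      rw [he, mpd_const']
    rw [mpd_mul' (fun a b => hgd a b y) (fun a b => hinvd a b y)] at h1
    have h2 : g y * mpd i (fun z => (g z)⁻¹) y = -(mpd i g y * (g y)⁻¹) :=
      eq_neg_of_add_eq_zero_right h1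
    calc mpd i (fun z => (g z)⁻¹) y
        = (g y)⁻¹ * (g y * mpd i (fun z => (g z)⁻¹) y) := by
          rw [← Matrix.mul_assoc, Matrix.nonsing_inv_mul _ (hU y), Matrix.one_mul]
      _ = -((g y)⁻¹ * mpd i g y * (g y)⁻¹) := by
          rw [h2, Matrix.mul_neg, Matrix.mul_assoc]
  -- inverse-derivative entries are differentiable
  have hmpdinvd : ∀ (i : Fin n) (a b) (y : Fin n → ℝ),
      DifferentiableAt ℝ (fun z => mpd i (fun w => (g w)⁻¹) z a b) y := by
    intro i a b y
    have he : (fun z => mpd i (fun w => (g w)⁻¹) z a b)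
        = fun z => -((g z)⁻¹ * mpd i g z * (g z)⁻¹) a b := by
      funext z; rw [hinv_deriv i z]; simp [Matrix.neg_apply]
    rw [he]
    simp only [Matrix.neg_apply, Matrix.mul_apply]
    apply DifferentiableAt.neg
    apply DifferentiableAt.fun_sum
    intro c _
    apply DifferentiableAt.mul
    · apply DifferentiableAt.fun_sum
      intro d _
      exact (hinvd a d y).mul (hmpdd i d c y)
    · exact hinvd c b y
  -- Schwarz symmetry
  have hschwarz : mpd k (mpd j g) x = mpd j (mpd k g) x := by
    ext a b
    exact pdC_comm (hC a b) j k x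
  -- expand the LHS
  have hfun : (fun y => ((g y)⁻¹)⁻¹ * mpd j (fun z => (g z)⁻¹) y)
      = fun y => -(mpd j g y * (g y)⁻¹) := by
    funext y
    rw [Matrix.nonsing_inv_nonsing_inv _ (hU y), hinv_deriv j y, Matrix.mul_neg,
      Matrix.mul_assoc ((g y)⁻¹), ← Matrix.mul_assoc (g y), Matrix.mul_nonsing_inv _ (hU y),
      Matrix.one_mul]
  have hLHS : Theta (fun y => (g y)⁻¹) j k x
      = -(mpd k (mpd j g) x * (g x)⁻¹ + mpd j g x * mpd k (fun z => (g z)⁻¹) x) := by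
    show mpd k (fun y => ((g y)⁻¹)⁻¹ * mpd j (fun z => (g z)⁻¹) y) x = _
    rw [hfun]
    rw [show (fun y => -(mpd j g y * (g y)⁻¹)) = fun y => -((fun z => mpd j g z * (g z)⁻¹) y)
      from rfl]
    rw [mpd_neg']
    rw [mpd_mul' (A := mpd j g) (B := fun z => (g z)⁻¹) (fun a b => hmpdd j a b x)
      (fun a b => hinvd a b x)]
  have hRHS : Theta g k j x
      = -((g x)⁻¹ * mpd j g x * (g x)⁻¹) * mpd k g x + (g x)⁻¹ * mpd j (mpd k g) x := by
    show mpd j (fun y => (g y)⁻¹ * mpd k g y) x = _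
    rw [mpd_mul' (A := fun z => (g z)⁻¹) (B := mpd k g) (fun a b => hinvd a b x)
      (fun a b => hmpdd k a b x)]
    rw [hinv_deriv j x]
  rw [hLHS, hRHS, hinv_deriv k x, hschwarz]
  exact matrix_alg (g x) ((g x)⁻¹) (mpd j g x) (mpd k g x) (mpd j (mpd k g) x)
    (Matrix.mul_nonsing_inv _ (hU x))

end KeyIdentity
theorem statement3 {n r : ℕ} (g : (Fin n → ℝ) → Matrix (Fin r) (Fin r) ℂ)
    (hg : IsMetric g) (hconc : GriffithsLogConcave g) :
    ∀ (x : Fin n → ℝ) (u : Fin r → ℂ) (v : Fin n → ℂ),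
      0 ≤ ∑ j, ∑ k,
        ip ((g x)⁻¹) ((Theta (fun y => (g y)⁻¹) j k x).mulVec u) u * (v j * star (v k)) := by
  intro x u v
  have hpd := hg.1
  have hU : ∀ y, IsUnit (g y).det := fun y => (hpd y).det_pos.ne'.isUnit
  set w : Fin r → ℂ := (g x)⁻¹.mulVec u with hw
  have hu : (g x).mulVec w = u := by
    rw [hw, Matrix.mulVec_mulVec, Matrix.mul_nonsing_inv _ (hU x), Matrix.one_mulVec]
  have hterm : ∀ j k : Fin n, ip ((g x)⁻¹) ((Theta (fun y => (g y)⁻¹) j k x).mulVec u) u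
      = -ip (g x) ((Theta g k j x).mulVec w) w := by
    intro j k
    rw [theta_inv_eq hg j k x]
    unfold ip
    rw [Matrix.neg_mulVec, Matrix.mulVec_neg, dotProduct_neg, neg_inj]
    have hcancel : ∀ z : Fin r → ℂ, (g x)⁻¹.mulVec ((g x).mulVec z) = z := fun z => by
      rw [Matrix.mulVec_mulVec, Matrix.nonsing_inv_mul _ (hU x), Matrix.one_mulVec]
    have hl : (g x)⁻¹.mulVec ((g x * Theta g k j x * (g x)⁻¹).mulVec u)
        = (Theta g k j x).mulVec w := by
      rw [← Matrix.mulVec_mulVec, ← Matrix.mulVec_mulVec, hcancel]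
    rw [hl, dotProduct_mulVec (star w) (g x)]
    congr 1
    rw [← hu, Matrix.star_mulVec, (hpd x).isHermitian.eq]
  have hstep : ∀ j k : Fin n,
      ip ((g x)⁻¹) ((Theta (fun y => (g y)⁻¹) j k x).mulVec u) u * (v j * star (v k))
      = -(ip (g x) ((Theta g k j x).mulVec w) w * (star (v k) * star (star (v j)))) := by
    intro j k
    rw [hterm j k, star_star]
    ring
  simp_rw [hstep]
  have hfin : (0:ℂ) ≤ -∑ j, ∑ k,
      ip (g x) ((Theta g k j x).mulVec w) w * (star (v k) * star (star (v j))) := by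
    rw [neg_nonneg, Finset.sum_comm]
    exact hconc x w fun i => star (v i)
  simpa [Finset.sum_neg_distrib] using hfin
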